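/- arXiv:1611.00498 — 10 statements merged into one kernel-verified Lean document; each statement's English description precedes it below -/
import Mathlib

section
/- Let F and G be the matrices defined from Γ and σ. Then F^{βγ} = G^{βγ} holds for every pair (β,γ) with 1 ≤ β,γ ≤ d if and only if the trilinear condition holds, i.e. Γ̂^α_{βγ} = Γ̂^α_{γβ} = Γ̂^β_{γα} for all 1 ≤ α,β,γ ≤ d. -/
section helpers

variable {M : Type*} [AddCommMonoid M] {ι : Type*} [Fintype ι]

private lemma sum_swap2 (f : ι → ι → M) :
    ∑ a, ∑ b, f a b = ∑ b, ∑ a, f a b := Finset.sum_comm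

private lemma sum_swap3 (f : ι → ι → ι → M) :
    ∑ a, ∑ b, ∑ c, f a b c = ∑ c, ∑ b, ∑ a, f a b c := by
  calc ∑ a, ∑ b, ∑ c, f a b c
      = ∑ a, ∑ c, ∑ b, f a b c := Finset.sum_congr rfl fun a _ => Finset.sum_comm
    _ = ∑ c, ∑ a, ∑ b, f a b c := Finset.sum_comm
    _ = ∑ c, ∑ b, ∑ a, f a b c := Finset.sum_congr rfl fun c _ => Finset.sum_comm

private lemma sum_swap4 (f : ι → ι → ι → ι → M) :
    ∑ x, ∑ y, ∑ a, ∑ b, f x y a b = ∑ b, ∑ a, ∑ x, ∑ y, f x y a b := by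
  calc ∑ x, ∑ y, ∑ a, ∑ b, f x y a b
      = ∑ x, ∑ b, ∑ a, ∑ y, f x y a b :=
        Finset.sum_congr rfl fun x _ => sum_swap3 (fun y a b => f x y a b)
    _ = ∑ b, ∑ x, ∑ a, ∑ y, f x y a b := Finset.sum_comm
    _ = ∑ b, ∑ a, ∑ x, ∑ y, f x y a b :=
        Finset.sum_congr rfl fun b _ => Finset.sum_comm

/-- Key combinatorial lemma: if the "commutator" quadratic identity holds on the
diagonal, then T is symmetric in its first two arguments. -/
private lemma sym_of_diag {d : ℕ} (T : Fin d → Fin d → Fin d → ℝ)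
    (h : ∑ a, ∑ x, ∑ y, T a x y * T a x y = ∑ a, ∑ x, ∑ y, T a x y * T x a y) :
    ∀ a x y, T a x y = T x a y := by
  have hswap : ∑ a, ∑ x, ∑ y, T x a y * T x a y
      = ∑ a, ∑ x, ∑ y, T a x y * T a x y := Finset.sum_comm
  have key : ∑ a, ∑ x, ∑ y, (T a x y - T x a y) ^ 2 = 0 := by
    have expand : ∀ a x y : Fin d, (T a x y - T x a y) ^ 2
        = (T a x y * T a x y + T x a y * T x a y) - 2 * (T a x y * T x a y) :=
      fun a x y => by ring
    calc ∑ a, ∑ x, ∑ y, (T a x y - T x a y) ^ 2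
        = (∑ a, ∑ x, ∑ y, (T a x y * T a x y + T x a y * T x a y))
          - ∑ a, ∑ x, ∑ y, 2 * (T a x y * T x a y) := by
          simp only [expand, Finset.sum_sub_distrib]
      _ = ((∑ a, ∑ x, ∑ y, T a x y * T a x y)
            + ∑ a, ∑ x, ∑ y, T x a y * T x a y)
          - 2 * ∑ a, ∑ x, ∑ y, T a x y * T x a y := by
          simp only [Finset.sum_add_distrib, Finset.mul_sum]
      _ = 0 := by rw [hswap, ← h]; ring
  intro a x y
  have h1 := (Finset.sum_eq_zero_iff_of_nonneg
    (fun i _ => Finset.sum_nonneg fun j _ => Finset.sum_nonneg fun k _ => sq_nonneg _)).1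
    key a (Finset.mem_univ a)
  have h2 := (Finset.sum_eq_zero_iff_of_nonneg
    (fun j _ => Finset.sum_nonneg fun k _ => sq_nonneg _)).1 h1 x (Finset.mem_univ x)
  have h3 := (Finset.sum_eq_zero_iff_of_nonneg
    (fun k _ => sq_nonneg _)).1 h2 y (Finset.mem_univ y)
  have h4 : T a x y - T x a y = 0 := by
    have := sq_eq_zero_iff.1 h3
    exact this
  linarith

end helpers

theorem stmt_0 (d : ℕ) (hd : 1 ≤ d)
    (Γ : Fin d → Fin d → Fin d → ℝ)
    (hΓsym : ∀ α β γ, Γ α β γ = Γ α γ β)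
    (σ τ : Matrix (Fin d) (Fin d) ℝ)
    (hστ : σ * τ = 1) (hτσ : τ * σ = 1)
    (Γhat : Fin d → Fin d → Fin d → ℝ)
    (hΓhat : ∀ α β γ, Γhat α β γ =
      ∑ α', ∑ β', ∑ γ', τ α α' * Γ α' β' γ' * σ β' β * σ γ' γ)
    (E : Fin d → Fin d → Fin d → ℝ)
    (hE : ∀ α β₁ β₂, E α β₁ β₂ = ∑ γ₁, ∑ γ₂, Γ α γ₁ γ₂ * σ γ₁ β₁ * σ γ₂ β₂)
    (F G : Fin d → Fin d → ℝ)
    (hF : ∀ β γ, F β γ = ∑ γ₁, ∑ γ₂, E β γ₁ γ₂ * E γ γ₁ γ₂)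
    (hG : ∀ β γ, G β γ = ∑ β₁, ∑ β₂, ∑ γ₁, ∑ γ₂,
      Γ β γ₁ γ₂ * E γ₁ β₁ β₂ * σ γ₂ β₂ * σ γ β₁) :
    (∀ β γ, F β γ = G β γ) ↔
      (∀ α β γ, Γhat α β γ = Γhat α γ β ∧ Γhat α β γ = Γhat β γ α) := by
  classical
  -- Γhat in terms of E
  have hΓhatE : ∀ α β γ, Γhat α β γ = ∑ α', τ α α' * E α' β γ := by
    intro α β γ
    rw [hΓhat]
    refine Finset.sum_congr rfl fun α' _ => ?_
    rw [hE, Finset.mul_sum]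
    refine Finset.sum_congr rfl fun β' _ => ?_
    rw [Finset.mul_sum]
    exact Finset.sum_congr rfl fun γ' _ => by ring
  -- E in terms of Γhat
  have hEΓ : ∀ α β γ, E α β γ = ∑ a, σ α a * Γhat a β γ := by
    intro α β γ
    have step : ∀ a, σ α a * Γhat a β γ = ∑ α', σ α a * (τ a α' * E α' β γ) := by
      intro a; rw [hΓhatE, Finset.mul_sum]
    calc E α β γ = ∑ α', (1 : Matrix (Fin d) (Fin d) ℝ) α α' * E α' β γ := by
          simp [Matrix.one_apply]
      _ = ∑ α', (σ * τ) α α' * E α' β γ := by rw [hστ]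
      _ = ∑ α', ∑ a, σ α a * τ a α' * E α' β γ := by
          refine Finset.sum_congr rfl fun α' _ => ?_
          rw [Matrix.mul_apply, Finset.sum_mul]
      _ = ∑ a, ∑ α', σ α a * τ a α' * E α' β γ := Finset.sum_comm
      _ = ∑ a, σ α a * Γhat a β γ := by
          refine Finset.sum_congr rfl fun a _ => ?_
          rw [step]
          exact Finset.sum_congr rfl fun α' _ => by ring
  -- Γhat is symmetric in its last two arguments
  have hsym23 : ∀ α β γ, Γhat α β γ = Γhat α γ β := by
    intro α β γ
    rw [hΓhat, hΓhat]
    refine Finset.sum_congr rfl fun α' _ => ?_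
    rw [Finset.sum_comm]
    refine Finset.sum_congr rfl fun γ' _ => Finset.sum_congr rfl fun β' _ => ?_
    rw [hΓsym α' γ' β']
    ring
  -- Matrices A and B
  set A : Matrix (Fin d) (Fin d) ℝ :=
    Matrix.of fun a b => ∑ x, ∑ y, Γhat a x y * Γhat b x y with hA
  set B : Matrix (Fin d) (Fin d) ℝ :=
    Matrix.of fun a b => ∑ c, ∑ y, Γhat a c y * Γhat c b y with hB
  -- F = σ A σᵀ
  have hFA : ∀ β γ, F β γ = (σ * A * σ.transpose) β γ := by
    intro β γ
    have rhs : (σ * A * σ.transpose) β γ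
        = ∑ b, ∑ a, ∑ x, ∑ y, σ β a * (Γhat a x y * Γhat b x y) * σ γ b := by
      rw [Matrix.mul_apply]
      refine Finset.sum_congr rfl fun b _ => ?_
      rw [Matrix.mul_apply, Matrix.transpose_apply, Finset.sum_mul]
      refine Finset.sum_congr rfl fun a _ => ?_
      simp only [hA, Matrix.of_apply, Finset.sum_mul, Finset.mul_sum]
    rw [rhs, hF]
    calc ∑ x, ∑ y, E β x y * E γ x y
        = ∑ x, ∑ y, ∑ a, ∑ b, σ β a * (Γhat a x y * Γhat b x y) * σ γ b := by
          refine Finset.sum_congr rfl fun x _ => Finset.sum_congr rfl fun y _ => ?_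
          rw [hEΓ, hEΓ, Finset.sum_mul]
          refine Finset.sum_congr rfl fun a _ => ?_
          rw [Finset.mul_sum]
          exact Finset.sum_congr rfl fun b _ => by ring
      _ = ∑ b, ∑ a, ∑ x, ∑ y, σ β a * (Γhat a x y * Γhat b x y) * σ γ b :=
          sum_swap4 _
  -- G = σ B σᵀ
  have hGB : ∀ β γ, G β γ = (σ * B * σ.transpose) β γ := by
    intro β γ
    have rhs : (σ * B * σ.transpose) β γ
        = ∑ b, ∑ a, ∑ c, ∑ y, σ β a * (Γhat a c y * Γhat c b y) * σ γ b := by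
      rw [Matrix.mul_apply]
      refine Finset.sum_congr rfl fun b _ => ?_
      rw [Matrix.mul_apply, Matrix.transpose_apply, Finset.sum_mul]
      refine Finset.sum_congr rfl fun a _ => ?_
      simp only [hB, Matrix.of_apply, Finset.sum_mul, Finset.mul_sum]
    rw [rhs, hG]
    -- first rewrite G into a 4-fold sum over (β₁ β₂ c a)
    calc ∑ β₁, ∑ β₂, ∑ γ₁, ∑ γ₂, Γ β γ₁ γ₂ * E γ₁ β₁ β₂ * σ γ₂ β₂ * σ γ β₁
        = ∑ β₁, ∑ β₂, ∑ c, E β c β₂ * Γhat c β₁ β₂ * σ γ β₁ := by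
          refine Finset.sum_congr rfl fun β₁ _ => Finset.sum_congr rfl fun β₂ _ => ?_
          calc ∑ γ₁, ∑ γ₂, Γ β γ₁ γ₂ * E γ₁ β₁ β₂ * σ γ₂ β₂ * σ γ β₁
              = ∑ γ₁, ∑ γ₂, ∑ c, Γ β γ₁ γ₂ * σ γ₁ c * σ γ₂ β₂ * (Γhat c β₁ β₂ * σ γ β₁) := by
                refine Finset.sum_congr rfl fun γ₁ _ => Finset.sum_congr rfl fun γ₂ _ => ?_
                rw [hEΓ, Finset.mul_sum, Finset.sum_mul, Finset.sum_mul]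
                exact Finset.sum_congr rfl fun c _ => by ring
            _ = ∑ c, ∑ γ₁, ∑ γ₂, Γ β γ₁ γ₂ * σ γ₁ c * σ γ₂ β₂ * (Γhat c β₁ β₂ * σ γ β₁) :=
                sum_swap3 _ |>.trans (Finset.sum_congr rfl fun c _ => Finset.sum_comm)
            _ = ∑ c, E β c β₂ * Γhat c β₁ β₂ * σ γ β₁ := by
                refine Finset.sum_congr rfl fun c _ => ?_
                rw [hE, Finset.sum_mul, Finset.sum_mul]
                refine Finset.sum_congr rfl fun γ₁ _ => ?_
                rw [Finset.sum_mul, Finset.sum_mul]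
                exact Finset.sum_congr rfl fun γ₂ _ => by ring
      _ = ∑ β₁, ∑ β₂, ∑ c, ∑ a, σ β a * (Γhat a c β₂ * Γhat c β₁ β₂) * σ γ β₁ := by
          refine Finset.sum_congr rfl fun β₁ _ => Finset.sum_congr rfl fun β₂ _ =>
            Finset.sum_congr rfl fun c _ => ?_
          rw [hEΓ, Finset.sum_mul, Finset.sum_mul]
          exact Finset.sum_congr rfl fun a _ => by ring
      _ = ∑ b, ∑ a, ∑ c, ∑ y, σ β a * (Γhat a c y * Γhat c b y) * σ γ b := by
          calc ∑ β₁, ∑ β₂, ∑ c, ∑ a, σ β a * (Γhat a c β₂ * Γhat c β₁ β₂) * σ γ β₁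
              = ∑ β₁, ∑ a, ∑ c, ∑ β₂, σ β a * (Γhat a c β₂ * Γhat c β₁ β₂) * σ γ β₁ :=
                Finset.sum_congr rfl fun β₁ _ => sum_swap3 _
            _ = ∑ b, ∑ a, ∑ c, ∑ y, σ β a * (Γhat a c y * Γhat c b y) * σ γ b := rfl
  -- equivalence with A = B
  have hAB_iff : (∀ β γ, F β γ = G β γ) ↔ A = B := by
    constructor
    · intro h
      have hmat : σ * A * σ.transpose = σ * B * σ.transpose := by
        ext β γ
        rw [← hFA, ← hGB]; exact h β γ
      have hτt : σ.transpose * τ.transpose = 1 := by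
        rw [← Matrix.transpose_mul, hτσ, Matrix.transpose_one]
      calc A = (τ * σ) * A * (σ.transpose * τ.transpose) := by
            rw [hτσ, hτt, Matrix.one_mul, Matrix.mul_one]
        _ = τ * (σ * A * σ.transpose) * τ.transpose := by
            simp only [Matrix.mul_assoc]
        _ = τ * (σ * B * σ.transpose) * τ.transpose := by rw [hmat]
        _ = (τ * σ) * B * (σ.transpose * τ.transpose) := by
            simp only [Matrix.mul_assoc]
        _ = B := by rw [hτσ, hτt, Matrix.one_mul, Matrix.mul_one]
    · intro h β γ
      rw [hFA, hGB, h]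
  rw [hAB_iff]
  constructor
  · intro hABeq
    -- diagonal identity
    have hdiag : ∑ a, ∑ x, ∑ y, Γhat a x y * Γhat a x y
        = ∑ a, ∑ x, ∑ y, Γhat a x y * Γhat x a y := by
      refine Finset.sum_congr rfl fun a _ => ?_
      have := congrFun (congrFun hABeq a) a
      simpa [hA, hB] using this
    have hsym12 := sym_of_diag Γhat hdiag
    intro α β γ
    refine ⟨hsym23 α β γ, ?_⟩
    calc Γhat α β γ = Γhat β α γ := hsym12 α β γ
      _ = Γhat β γ α := hsym23 β α γ
  · intro hsym
    ext a b
    simp only [hA, hB, Matrix.of_apply]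
    refine Finset.sum_congr rfl fun c _ => Finset.sum_congr rfl fun y _ => ?_
    have h1 : Γhat c b y = Γhat b c y := (hsym c b y).2.trans (hsym b y c).1
    rw [h1]
end

section
/- Let a = (a^α_{βγ})_{1≤α,β,γ≤d} be a real tensor satisfying a^α_{βγ} = a^α_{γβ}. If Σ_{β,β₁,β₂} a^β_{β₁β₂}( a^{β₁}_{ββ₂} − a^β_{β₁β₂} ) = 0, then a^{β₁}_{ββ₂} = a^β_{β₁β₂} for all 1 ≤ β,β₁,β₂ ≤ d. -/
theorem stmt_3 (d : ℕ) (hd : 1 ≤ d)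
    (a : Fin d → Fin d → Fin d → ℝ)
    (hsym : ∀ α β γ, a α β γ = a α γ β)
    (h : ∑ β, ∑ β₁, ∑ β₂, a β β₁ β₂ * (a β₁ β β₂ - a β β₁ β₂) = 0) :
    ∀ β β₁ β₂, a β₁ β β₂ = a β β₁ β₂ := by
  have hswap : ∑ β, ∑ β₁, ∑ β₂, (a β₁ β β₂)^2 = ∑ β, ∑ β₁, ∑ β₂, (a β β₁ β₂)^2 :=
    Finset.sum_comm
  have hS : ∑ β, ∑ β₁, ∑ β₂, (a β₁ β β₂ - a β β₁ β₂)^2 = 0 := by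
    have expand : ∑ β, ∑ β₁, ∑ β₂, (a β₁ β β₂ - a β β₁ β₂)^2
        = (∑ β, ∑ β₁, ∑ β₂, (a β₁ β β₂)^2)
          - (∑ β, ∑ β₁, ∑ β₂, (a β β₁ β₂)^2)
          - 2 * ∑ β, ∑ β₁, ∑ β₂, a β β₁ β₂ * (a β₁ β β₂ - a β β₁ β₂) := by
      simp only [Finset.mul_sum, ← Finset.sum_sub_distrib]
      apply Finset.sum_congr rfl; intro β _
      apply Finset.sum_congr rfl; intro β₁ _
      apply Finset.sum_congr rfl; intro β₂ _
      ring
    rw [expand, hswap, h]; ring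
  intro β β₁ β₂
  have h1 : ∀ x ∈ Finset.univ, (0:ℝ) ≤ ∑ β₁, ∑ β₂, (a β₁ x β₂ - a x β₁ β₂)^2 := by
    intro x _
    exact Finset.sum_nonneg fun _ _ => Finset.sum_nonneg fun _ _ => sq_nonneg _
  have h2 := (Finset.sum_eq_zero_iff_of_nonneg h1).mp hS β (Finset.mem_univ β)
  have h3 : ∀ x ∈ Finset.univ, (0:ℝ) ≤ ∑ β₂, (a x β β₂ - a β x β₂)^2 :=
    fun x _ => Finset.sum_nonneg fun _ _ => sq_nonneg _
  have h4 := (Finset.sum_eq_zero_iff_of_nonneg h3).mp h2 β₁ (Finset.mem_univ β₁)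
  have h5 := (Finset.sum_eq_zero_iff_of_nonneg
    (fun x _ => sq_nonneg (a β₁ β x - a β β₁ x))).mp h4 β₂ (Finset.mem_univ β₂)
  have := sq_eq_zero_iff.mp h5
  linarith
end

section
/- The trilinear condition Γ̂^α_{βγ} = Γ̂^α_{γβ} = Γ̂^β_{γα} (for all α,β,γ) holds if and only if the lowered tensor Γ̃ is fully symmetric, i.e. Γ̃_{αβγ} = Γ̃_{αγβ} = Γ̃_{βαγ} for all 1 ≤ α,β,γ ≤ d. -/
open Matrix


theorem stmt_4 (d : ℕ) (hd : 1 ≤ d)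
    (Γ : Fin d → Fin d → Fin d → ℝ)
    (hΓsym : ∀ α β γ, Γ α β γ = Γ α γ β)
    (σ τ : Matrix (Fin d) (Fin d) ℝ)
    (hστ : σ * τ = 1) (hτσ : τ * σ = 1)
    (Γhat : Fin d → Fin d → Fin d → ℝ)
    (hΓhat : ∀ α β γ, Γhat α β γ =
      ∑ α', ∑ β', ∑ γ', τ α α' * Γ α' β' γ' * σ β' β * σ γ' γ)
    (A : Matrix (Fin d) (Fin d) ℝ)
    (hA : ∀ α β, A α β = ∑ δ, σ α δ * σ β δ)
    (Γtilde : Fin d → Fin d → Fin d → ℝ)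
    (hΓtilde : ∀ α β γ, Γtilde α β γ = ∑ α', A⁻¹ α α' * Γ α' β γ) :
    (∀ α β γ, Γhat α β γ = Γhat α γ β ∧ Γhat α β γ = Γhat β γ α) ↔
      (∀ α β γ, Γtilde α β γ = Γtilde α γ β ∧ Γtilde α β γ = Γtilde β α γ) := by
  classical
  -- A = σ σᵀ and A⁻¹ = τᵀ τ
  have hA' : A = σ * σᵀ := by
    ext α β; simp [hA, Matrix.mul_apply, Matrix.transpose_apply]
  have hAinv : A⁻¹ = τᵀ * τ := by
    apply Matrix.inv_eq_right_inv
    rw [hA', Matrix.mul_assoc, ← Matrix.mul_assoc σᵀ, ← Matrix.transpose_mul, hτσ,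
      Matrix.transpose_one, Matrix.one_mul, hστ]
  have key1m : σᵀ * A⁻¹ = τ := by
    rw [hAinv, ← Matrix.mul_assoc, ← Matrix.transpose_mul, hτσ, Matrix.transpose_one,
      Matrix.one_mul]
  have key1 : ∀ α α', (∑ a, σ a α * A⁻¹ a α') = τ α α' := by
    intro α α'
    have := congrFun (congrFun key1m α) α'
    simpa [Matrix.mul_apply, Matrix.transpose_apply] using this
  -- generic sum reorderings
  have reverse3 : ∀ f : Fin d → Fin d → Fin d → ℝ,
      (∑ a, ∑ b, ∑ c, f a b c) = ∑ c, ∑ b, ∑ a, f a b c := by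
    intro f
    calc (∑ a, ∑ b, ∑ c, f a b c) = ∑ a, ∑ c, ∑ b, f a b c :=
          Finset.sum_congr rfl fun a _ => Finset.sum_comm
      _ = ∑ c, ∑ a, ∑ b, f a b c := Finset.sum_comm
      _ = ∑ c, ∑ b, ∑ a, f a b c := Finset.sum_congr rfl fun c _ => Finset.sum_comm
  have cycle3 : ∀ f : Fin d → Fin d → Fin d → ℝ,
      (∑ a, ∑ b, ∑ c, f a b c) = ∑ c, ∑ a, ∑ b, f a b c := by
    intro f
    calc (∑ a, ∑ b, ∑ c, f a b c) = ∑ a, ∑ c, ∑ b, f a b c :=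
          Finset.sum_congr rfl fun a _ => Finset.sum_comm
      _ = ∑ c, ∑ a, ∑ b, f a b c := Finset.sum_comm
  -- contraction lemma: τ then σ collapses
  have lem : ∀ (g : Fin d → ℝ) (x0 : Fin d),
      (∑ x, τ x x0 * ∑ y, σ y x * g y) = g x0 := by
    intro g x0
    calc (∑ x, τ x x0 * ∑ y, σ y x * g y)
        = ∑ x, ∑ y, σ y x * τ x x0 * g y := by
          refine Finset.sum_congr rfl fun x _ => ?_
          rw [Finset.mul_sum]
          exact Finset.sum_congr rfl fun y _ => by ring
      _ = ∑ y, ∑ x, σ y x * τ x x0 * g y := Finset.sum_comm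
      _ = ∑ y, (∑ x, σ y x * τ x x0) * g y := by
          refine Finset.sum_congr rfl fun y _ => ?_
          rw [Finset.sum_mul]
      _ = ∑ y, (σ * τ) y x0 * g y := by
          refine Finset.sum_congr rfl fun y _ => ?_
          rw [Matrix.mul_apply]
      _ = g x0 := by simp [hστ, Matrix.one_apply]
  -- contraction with A⁻¹
  have lem2 : ∀ (g : Fin d → ℝ) (α : Fin d),
      (∑ a, σ a α * ∑ α', A⁻¹ a α' * g α') = ∑ α', τ α α' * g α' := by
    intro g α
    calc (∑ a, σ a α * ∑ α', A⁻¹ a α' * g α')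
        = ∑ a, ∑ α', σ a α * A⁻¹ a α' * g α' := by
          refine Finset.sum_congr rfl fun a _ => ?_
          rw [Finset.mul_sum]
          exact Finset.sum_congr rfl fun α' _ => by ring
      _ = ∑ α', ∑ a, σ a α * A⁻¹ a α' * g α' := Finset.sum_comm
      _ = ∑ α', (∑ a, σ a α * A⁻¹ a α') * g α' := by
          refine Finset.sum_congr rfl fun α' _ => ?_
          rw [Finset.sum_mul]
      _ = ∑ α', τ α α' * g α' := by
          refine Finset.sum_congr rfl fun α' _ => ?_
          rw [key1]
  -- Γhat in nested form (last index outermost)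
  have hGhatN : ∀ α β γ, Γhat α β γ =
      ∑ c, σ c γ * ∑ b, σ b β * ∑ a, σ a α * Γtilde a b c := by
    intro α β γ
    have inner : ∀ b c, (∑ a, σ a α * Γtilde a b c) = ∑ α', τ α α' * Γ α' b c := by
      intro b c
      have := lem2 (fun α' => Γ α' b c) α
      simpa [hΓtilde] using this
    calc Γhat α β γ = ∑ α', ∑ β', ∑ γ', τ α α' * Γ α' β' γ' * σ β' β * σ γ' γ :=
          hΓhat α β γ
      _ = ∑ γ', ∑ β', ∑ α', τ α α' * Γ α' β' γ' * σ β' β * σ γ' γ :=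
          reverse3 _
      _ = ∑ c, σ c γ * ∑ b, σ b β * ∑ α', τ α α' * Γ α' b c := by
          refine Finset.sum_congr rfl fun c _ => ?_
          rw [Finset.mul_sum]
          refine Finset.sum_congr rfl fun b _ => ?_
          rw [Finset.mul_sum, Finset.mul_sum]
          exact Finset.sum_congr rfl fun α' _ => by ring
      _ = ∑ c, σ c γ * ∑ b, σ b β * ∑ a, σ a α * Γtilde a b c := by
          refine Finset.sum_congr rfl fun c _ => ?_
          refine congrArg _ ?_
          refine Finset.sum_congr rfl fun b _ => ?_
          rw [inner b c]
  -- Γhat in flat form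
  have hGhatF : ∀ α β γ, Γhat α β γ =
      ∑ a, ∑ b, ∑ c, σ a α * σ b β * σ c γ * Γtilde a b c := by
    intro α β γ
    rw [hGhatN α β γ, reverse3 (fun a b c => σ a α * σ b β * σ c γ * Γtilde a b c)]
    refine Finset.sum_congr rfl fun c _ => ?_
    rw [Finset.mul_sum]
    refine Finset.sum_congr rfl fun b _ => ?_
    rw [Finset.mul_sum, Finset.mul_sum]
    exact Finset.sum_congr rfl fun a _ => by ring
  -- Γtilde in flat form from Γhat
  have hGtildeF : ∀ a b c, Γtilde a b c =
      ∑ α, ∑ β, ∑ γ, τ α a * τ β b * τ γ c * Γhat α β γ := by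
    intro a b c
    have step : (∑ α, τ α a * ∑ β, τ β b * ∑ γ, τ γ c * Γhat α β γ) = Γtilde a b c := by
      have h1 : ∀ α β, (∑ γ, τ γ c * Γhat α β γ) =
          ∑ b', σ b' β * ∑ a', σ a' α * Γtilde a' b' c := by
        intro α β
        have := lem (fun c' => ∑ b', σ b' β * ∑ a', σ a' α * Γtilde a' b' c') c
        calc (∑ γ, τ γ c * Γhat α β γ)
            = ∑ γ, τ γ c * ∑ c', σ c' γ * ∑ b', σ b' β * ∑ a', σ a' α * Γtilde a' b' c' := by
              exact Finset.sum_congr rfl fun γ _ => by rw [hGhatN α β γ]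
          _ = ∑ b', σ b' β * ∑ a', σ a' α * Γtilde a' b' c := this
      have h2 : ∀ α, (∑ β, τ β b * ∑ γ, τ γ c * Γhat α β γ) =
          ∑ a', σ a' α * Γtilde a' b c := by
        intro α
        have := lem (fun b' => ∑ a', σ a' α * Γtilde a' b' c) b
        calc (∑ β, τ β b * ∑ γ, τ γ c * Γhat α β γ)
            = ∑ β, τ β b * ∑ b', σ b' β * ∑ a', σ a' α * Γtilde a' b' c :=
              Finset.sum_congr rfl fun β _ => by rw [h1 α β]
          _ = ∑ a', σ a' α * Γtilde a' b c := this
      calc (∑ α, τ α a * ∑ β, τ β b * ∑ γ, τ γ c * Γhat α β γ)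
          = ∑ α, τ α a * ∑ a', σ a' α * Γtilde a' b c :=
            Finset.sum_congr rfl fun α _ => by rw [h2 α]
        _ = Γtilde a b c := lem (fun a' => Γtilde a' b c) a
    rw [← step]
    refine Finset.sum_congr rfl fun α _ => ?_
    rw [Finset.mul_sum]
    refine Finset.sum_congr rfl fun β _ => ?_
    rw [Finset.mul_sum, Finset.mul_sum]
    exact Finset.sum_congr rfl fun γ _ => by ring
  -- generic transfer of cyclic symmetry
  have transfer : ∀ (M : Matrix (Fin d) (Fin d) ℝ) (T S : Fin d → Fin d → Fin d → ℝ),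
      (∀ α β γ, T α β γ = ∑ a, ∑ b, ∑ c, M a α * M b β * M c γ * S a b c) →
      (∀ a b c, S a b c = S b c a) →
      ∀ α β γ, T α β γ = T β γ α := by
    intro M T S hTS hS α β γ
    rw [hTS α β γ, hTS β γ α,
      cycle3 (fun a b c => M a β * M b γ * M c α * S a b c)]
    refine Finset.sum_congr rfl fun u _ => Finset.sum_congr rfl fun v _ =>
      Finset.sum_congr rfl fun w _ => ?_
    rw [hS u v w]; ring
  -- unconditional symmetry in the last two slots
  have hswap_hat : ∀ α β γ, Γhat α β γ = Γhat α γ β := by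
    intro α β γ
    rw [hΓhat α β γ, hΓhat α γ β]
    refine Finset.sum_congr rfl fun α' _ => ?_
    rw [Finset.sum_comm]
    refine Finset.sum_congr rfl fun γ' _ => Finset.sum_congr rfl fun β' _ => ?_
    rw [hΓsym α' β' γ']; ring
  have hswap_tilde : ∀ α β γ, Γtilde α β γ = Γtilde α γ β := by
    intro α β γ
    rw [hΓtilde α β γ, hΓtilde α γ β]
    exact Finset.sum_congr rfl fun α' _ => by rw [hΓsym α' β γ]
  constructor
  · intro h α β γ
    refine ⟨hswap_tilde α β γ, ?_⟩
    have hc : ∀ a b c, Γhat a b c = Γhat b c a := fun a b c => (h a b c).2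
    have := transfer τ Γtilde Γhat hGtildeF hc α β γ
    rw [this, hswap_tilde β γ α]
  · intro h α β γ
    refine ⟨hswap_hat α β γ, ?_⟩
    have hc : ∀ a b c, Γtilde a b c = Γtilde b c a := by
      intro a b c
      rw [(h a b c).2, (h b a c).1]
    exact transfer σ Γhat Γtilde hGhatF hc α β γ
end

section
/- The equality Σ_{β,γ} Γ^α_{βγ} F^{βγ} = Σ_{β,γ} Γ^α_{βγ} G^{βγ} holds for every 1 ≤ α ≤ d if and only if Σ_{α₁,α₂,α₃,α₄} Γ̂^α_{α₁α₂} Γ̂^{α₁}_{α₃α₄} Γ̂^{α₂}_{α₃α₄} = Σ_{α₁,α₂,α₃,α₄} Γ̂^α_{α₁α₂} Γ̂^{α₁}_{α₃α₄} Γ̂^{α₃}_{α₂α₄} holds for every 1 ≤ α ≤ d. -/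
private lemma reorder4k {ι : Type*} [Fintype ι] (f : ι → ι → ι → ι → ℝ) :
    ∑ x1, ∑ x2, ∑ x3, ∑ x4, f x1 x2 x3 x4 = ∑ x2, ∑ x3, ∑ x4, ∑ x1, f x1 x2 x3 x4 := by
  conv_lhs => rw [Finset.sum_comm]
  conv_lhs => enter [2, y0]; rw [Finset.sum_comm]
  conv_lhs => enter [2, y0, 2, y1]; rw [Finset.sum_comm]

private lemma reorder4g {ι : Type*} [Fintype ι] (f : ι → ι → ι → ι → ℝ) :
    ∑ x1, ∑ x2, ∑ x3, ∑ x4, f x1 x2 x3 x4 = ∑ x1, ∑ x3, ∑ x4, ∑ x2, f x1 x2 x3 x4 := by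
  conv_lhs => enter [2, y0]; rw [Finset.sum_comm]
  conv_lhs => enter [2, y0, 2, y1]; rw [Finset.sum_comm]

private lemma reorderA1 {ι : Type*} [Fintype ι] (f : ι → ι → ι → ι → ι → ι → ι → ℝ) :
    ∑ x1, ∑ x2, ∑ x3, ∑ x4, ∑ x5, ∑ x6, ∑ x7, f x1 x2 x3 x4 x5 x6 x7 = ∑ x5, ∑ x6, ∑ x7, ∑ x3, ∑ x4, ∑ x1, ∑ x2, f x1 x2 x3 x4 x5 x6 x7 := by
  conv_lhs => enter [2, y0, 2, y1, 2, y2]; rw [Finset.sum_comm]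
  conv_lhs => enter [2, y0, 2, y1]; rw [Finset.sum_comm]
  conv_lhs => enter [2, y0]; rw [Finset.sum_comm]
  conv_lhs => rw [Finset.sum_comm]
  conv_lhs => enter [2, y0, 2, y1, 2, y2, 2, y3]; rw [Finset.sum_comm]
  conv_lhs => enter [2, y0, 2, y1, 2, y2]; rw [Finset.sum_comm]
  conv_lhs => enter [2, y0, 2, y1]; rw [Finset.sum_comm]
  conv_lhs => enter [2, y0]; rw [Finset.sum_comm]
  conv_lhs => enter [2, y0, 2, y1, 2, y2, 2, y3, 2, y4]; rw [Finset.sum_comm]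
  conv_lhs => enter [2, y0, 2, y1, 2, y2, 2, y3]; rw [Finset.sum_comm]
  conv_lhs => enter [2, y0, 2, y1, 2, y2]; rw [Finset.sum_comm]
  conv_lhs => enter [2, y0, 2, y1]; rw [Finset.sum_comm]
  conv_lhs => enter [2, y0, 2, y1, 2, y2, 2, y3]; rw [Finset.sum_comm]
  conv_lhs => enter [2, y0, 2, y1, 2, y2]; rw [Finset.sum_comm]
  conv_lhs => enter [2, y0, 2, y1, 2, y2, 2, y3, 2, y4]; rw [Finset.sum_comm]
  conv_lhs => enter [2, y0, 2, y1, 2, y2, 2, y3]; rw [Finset.sum_comm]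

private lemma reorderB1 {ι : Type*} [Fintype ι] (f : ι → ι → ι → ι → ι → ι → ι → ℝ) :
    ∑ x1, ∑ x2, ∑ x3, ∑ x4, ∑ x5, ∑ x6, ∑ x7, f x1 x2 x3 x4 x5 x6 x7 = ∑ x5, ∑ x6, ∑ x7, ∑ x2, ∑ x3, ∑ x4, ∑ x1, f x1 x2 x3 x4 x5 x6 x7 := by
  conv_lhs => enter [2, y0, 2, y1, 2, y2]; rw [Finset.sum_comm]
  conv_lhs => enter [2, y0, 2, y1]; rw [Finset.sum_comm]
  conv_lhs => enter [2, y0]; rw [Finset.sum_comm]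
  conv_lhs => rw [Finset.sum_comm]
  conv_lhs => enter [2, y0, 2, y1, 2, y2, 2, y3]; rw [Finset.sum_comm]
  conv_lhs => enter [2, y0, 2, y1, 2, y2]; rw [Finset.sum_comm]
  conv_lhs => enter [2, y0, 2, y1]; rw [Finset.sum_comm]
  conv_lhs => enter [2, y0]; rw [Finset.sum_comm]
  conv_lhs => enter [2, y0, 2, y1, 2, y2, 2, y3, 2, y4]; rw [Finset.sum_comm]
  conv_lhs => enter [2, y0, 2, y1, 2, y2, 2, y3]; rw [Finset.sum_comm]
  conv_lhs => enter [2, y0, 2, y1, 2, y2]; rw [Finset.sum_comm]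
  conv_lhs => enter [2, y0, 2, y1]; rw [Finset.sum_comm]
  conv_lhs => enter [2, y0, 2, y1, 2, y2]; rw [Finset.sum_comm]
  conv_lhs => enter [2, y0, 2, y1, 2, y2, 2, y3]; rw [Finset.sum_comm]
  conv_lhs => enter [2, y0, 2, y1, 2, y2, 2, y3, 2, y4]; rw [Finset.sum_comm]

private lemma reorderB2 {ι : Type*} [Fintype ι] (f : ι → ι → ι → ι → ι → ι → ι → ι → ℝ) :
    ∑ x1, ∑ x2, ∑ x3, ∑ x4, ∑ x5, ∑ x6, ∑ x7, ∑ x8, f x1 x2 x3 x4 x5 x6 x7 x8 = ∑ x1, ∑ x2, ∑ x3, ∑ x4, ∑ x7, ∑ x8, ∑ x6, ∑ x5, f x1 x2 x3 x4 x5 x6 x7 x8 := by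
  conv_lhs => enter [2, y0, 2, y1, 2, y2, 2, y3, 2, y4]; rw [Finset.sum_comm]
  conv_lhs => enter [2, y0, 2, y1, 2, y2, 2, y3]; rw [Finset.sum_comm]
  conv_lhs => enter [2, y0, 2, y1, 2, y2, 2, y3, 2, y4, 2, y5]; rw [Finset.sum_comm]
  conv_lhs => enter [2, y0, 2, y1, 2, y2, 2, y3, 2, y4]; rw [Finset.sum_comm]
  conv_lhs => enter [2, y0, 2, y1, 2, y2, 2, y3, 2, y4, 2, y5]; rw [Finset.sum_comm]

theorem stmt_8 (d : ℕ) (hd : 1 ≤ d)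
    (Γ : Fin d → Fin d → Fin d → ℝ)
    (hΓsym : ∀ α β γ, Γ α β γ = Γ α γ β)
    (σ τ : Matrix (Fin d) (Fin d) ℝ)
    (hστ : σ * τ = 1) (hτσ : τ * σ = 1)
    (Γhat : Fin d → Fin d → Fin d → ℝ)
    (hΓhat : ∀ α β γ, Γhat α β γ =
      ∑ α', ∑ β', ∑ γ', τ α α' * Γ α' β' γ' * σ β' β * σ γ' γ)
    (E : Fin d → Fin d → Fin d → ℝ)
    (hE : ∀ α β₁ β₂, E α β₁ β₂ = ∑ γ₁, ∑ γ₂, Γ α γ₁ γ₂ * σ γ₁ β₁ * σ γ₂ β₂)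
    (F G : Fin d → Fin d → ℝ)
    (hF : ∀ β γ, F β γ = ∑ γ₁, ∑ γ₂, E β γ₁ γ₂ * E γ γ₁ γ₂)
    (hG : ∀ β γ, G β γ = ∑ β₁, ∑ β₂, ∑ γ₁, ∑ γ₂,
      Γ β γ₁ γ₂ * E γ₁ β₁ β₂ * σ γ₂ β₂ * σ γ β₁) :
    (∀ α, ∑ β, ∑ γ, Γ α β γ * F β γ = ∑ β, ∑ γ, Γ α β γ * G β γ) ↔
      (∀ α, ∑ α₁, ∑ α₂, ∑ α₃, ∑ α₄,
          Γhat α α₁ α₂ * Γhat α₁ α₃ α₄ * Γhat α₂ α₃ α₄ =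
        ∑ α₁, ∑ α₂, ∑ α₃, ∑ α₄,
          Γhat α α₁ α₂ * Γhat α₁ α₃ α₄ * Γhat α₃ α₂ α₄) := by
  have hδ : ∀ i j, (∑ k, σ i k * τ k j) = if i = j then (1:ℝ) else 0 := by
    intro i j
    have h : (σ * τ) i j = (1 : Matrix (Fin d) (Fin d) ℝ) i j := by rw [hστ]
    rw [Matrix.mul_apply] at h
    rw [Matrix.one_apply] at h
    exact h
  have key : ∀ b x y, (∑ k, σ b k * Γhat k x y) = E b x y := by
    intro b x y
    calc ∑ k, σ b k * Γhat k x y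
        = ∑ k, ∑ a, ∑ p, ∑ q, σ b k * τ k a * (Γ a p q * σ p x * σ q y) := by
          refine Finset.sum_congr rfl fun k _ => ?_
          rw [hΓhat, Finset.mul_sum]
          refine Finset.sum_congr rfl fun a _ => ?_
          rw [Finset.mul_sum]
          refine Finset.sum_congr rfl fun p _ => ?_
          rw [Finset.mul_sum]
          refine Finset.sum_congr rfl fun q _ => ?_
          ring
      _ = ∑ a, ∑ p, ∑ q, ∑ k, σ b k * τ k a * (Γ a p q * σ p x * σ q y) :=
          reorder4k fun k a p q => σ b k * τ k a * (Γ a p q * σ p x * σ q y)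
      _ = ∑ a, (if b = a then (1:ℝ) else 0) * (∑ p, ∑ q, Γ a p q * σ p x * σ q y) := by
          refine Finset.sum_congr rfl fun a _ => ?_
          rw [Finset.mul_sum]
          refine Finset.sum_congr rfl fun p _ => ?_
          rw [Finset.mul_sum]
          refine Finset.sum_congr rfl fun q _ => ?_
          rw [← Finset.sum_mul, hδ]
      _ = E b x y := by rw [hE]; simp
  have hA : ∀ α, (∑ α₁, ∑ α₂, ∑ α₃, ∑ α₄,
        Γhat α α₁ α₂ * Γhat α₁ α₃ α₄ * Γhat α₂ α₃ α₄)
      = ∑ a, τ α a * ∑ b, ∑ c, Γ a b c * F b c := by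
    intro α
    calc ∑ α₁, ∑ α₂, ∑ α₃, ∑ α₄, Γhat α α₁ α₂ * Γhat α₁ α₃ α₄ * Γhat α₂ α₃ α₄
        = ∑ α₁, ∑ α₂, ∑ α₃, ∑ α₄, ∑ a, ∑ b, ∑ c,
            τ α a * Γ a b c * ((σ b α₁ * Γhat α₁ α₃ α₄) * (σ c α₂ * Γhat α₂ α₃ α₄)) := by
          refine Finset.sum_congr rfl fun α₁ _ => Finset.sum_congr rfl fun α₂ _ =>
            Finset.sum_congr rfl fun α₃ _ => Finset.sum_congr rfl fun α₄ _ => ?_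
          rw [hΓhat]
          simp only [Finset.sum_mul]
          refine Finset.sum_congr rfl fun a _ => Finset.sum_congr rfl fun b _ =>
            Finset.sum_congr rfl fun c _ => ?_
          ring
      _ = ∑ a, ∑ b, ∑ c, ∑ α₃, ∑ α₄, ∑ α₁, ∑ α₂,
            τ α a * Γ a b c * ((σ b α₁ * Γhat α₁ α₃ α₄) * (σ c α₂ * Γhat α₂ α₃ α₄)) :=
          reorderA1 fun α₁ α₂ α₃ α₄ a b c =>
            τ α a * Γ a b c * ((σ b α₁ * Γhat α₁ α₃ α₄) * (σ c α₂ * Γhat α₂ α₃ α₄))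
      _ = ∑ a, τ α a * ∑ b, ∑ c, Γ a b c * F b c := by
          refine Finset.sum_congr rfl fun a _ => ?_
          rw [Finset.mul_sum]
          refine Finset.sum_congr rfl fun b _ => ?_
          rw [Finset.mul_sum]
          refine Finset.sum_congr rfl fun c _ => ?_
          rw [hF]
          rw [Finset.mul_sum, Finset.mul_sum]
          refine Finset.sum_congr rfl fun α₃ _ => ?_
          rw [Finset.mul_sum, Finset.mul_sum]
          refine Finset.sum_congr rfl fun α₄ _ => ?_
          rw [← key b α₃ α₄, ← key c α₃ α₄, Finset.sum_mul_sum]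
          rw [Finset.mul_sum, Finset.mul_sum]
          refine Finset.sum_congr rfl fun α₁ _ => ?_
          rw [Finset.mul_sum, Finset.mul_sum]
          refine Finset.sum_congr rfl fun α₂ _ => ?_
          ring
  have hB : ∀ α, (∑ α₁, ∑ α₂, ∑ α₃, ∑ α₄,
        Γhat α α₁ α₂ * Γhat α₁ α₃ α₄ * Γhat α₃ α₂ α₄)
      = ∑ a, τ α a * ∑ b, ∑ c, Γ a b c * G b c := by
    intro α
    calc ∑ α₁, ∑ α₂, ∑ α₃, ∑ α₄, Γhat α α₁ α₂ * Γhat α₁ α₃ α₄ * Γhat α₃ α₂ α₄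
        = ∑ α₁, ∑ α₂, ∑ α₃, ∑ α₄, ∑ a, ∑ b, ∑ c,
            τ α a * Γ a b c * σ c α₂ * Γhat α₃ α₂ α₄ * (σ b α₁ * Γhat α₁ α₃ α₄) := by
          refine Finset.sum_congr rfl fun α₁ _ => Finset.sum_congr rfl fun α₂ _ =>
            Finset.sum_congr rfl fun α₃ _ => Finset.sum_congr rfl fun α₄ _ => ?_
          rw [hΓhat]
          simp only [Finset.sum_mul]
          refine Finset.sum_congr rfl fun a _ => Finset.sum_congr rfl fun b _ =>
            Finset.sum_congr rfl fun c _ => ?_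
          ring
      _ = ∑ a, ∑ b, ∑ c, ∑ α₂, ∑ α₃, ∑ α₄, ∑ α₁,
            τ α a * Γ a b c * σ c α₂ * Γhat α₃ α₂ α₄ * (σ b α₁ * Γhat α₁ α₃ α₄) :=
          reorderB1 fun α₁ α₂ α₃ α₄ a b c =>
            τ α a * Γ a b c * σ c α₂ * Γhat α₃ α₂ α₄ * (σ b α₁ * Γhat α₁ α₃ α₄)
      _ = ∑ a, ∑ b, ∑ c, ∑ α₂, ∑ α₃, ∑ α₄,
            τ α a * Γ a b c * σ c α₂ * Γhat α₃ α₂ α₄ * E b α₃ α₄ := by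
          refine Finset.sum_congr rfl fun a _ => Finset.sum_congr rfl fun b _ =>
            Finset.sum_congr rfl fun c _ => Finset.sum_congr rfl fun α₂ _ =>
            Finset.sum_congr rfl fun α₃ _ => Finset.sum_congr rfl fun α₄ _ => ?_
          rw [← Finset.mul_sum, key]
      _ = ∑ a, ∑ b, ∑ c, ∑ α₂, ∑ α₃, ∑ α₄, ∑ γ₁, ∑ γ₂,
            τ α a * Γ a b c * σ c α₂ * σ γ₂ α₄ * Γ b γ₁ γ₂ * (σ γ₁ α₃ * Γhat α₃ α₂ α₄) := by
          refine Finset.sum_congr rfl fun a _ => Finset.sum_congr rfl fun b _ =>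
            Finset.sum_congr rfl fun c _ => Finset.sum_congr rfl fun α₂ _ =>
            Finset.sum_congr rfl fun α₃ _ => Finset.sum_congr rfl fun α₄ _ => ?_
          rw [hE]
          simp only [Finset.mul_sum]
          refine Finset.sum_congr rfl fun γ₁ _ => Finset.sum_congr rfl fun γ₂ _ => ?_
          ring
      _ = ∑ a, ∑ b, ∑ c, ∑ α₂, ∑ γ₁, ∑ γ₂, ∑ α₄, ∑ α₃,
            τ α a * Γ a b c * σ c α₂ * σ γ₂ α₄ * Γ b γ₁ γ₂ * (σ γ₁ α₃ * Γhat α₃ α₂ α₄) :=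
          reorderB2 fun a b c α₂ α₃ α₄ γ₁ γ₂ =>
            τ α a * Γ a b c * σ c α₂ * σ γ₂ α₄ * Γ b γ₁ γ₂ * (σ γ₁ α₃ * Γhat α₃ α₂ α₄)
      _ = ∑ a, ∑ b, ∑ c, ∑ α₂, ∑ γ₁, ∑ γ₂, ∑ α₄,
            τ α a * Γ a b c * σ c α₂ * σ γ₂ α₄ * Γ b γ₁ γ₂ * E γ₁ α₂ α₄ := by
          refine Finset.sum_congr rfl fun a _ => Finset.sum_congr rfl fun b _ =>
            Finset.sum_congr rfl fun c _ => Finset.sum_congr rfl fun α₂ _ =>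
            Finset.sum_congr rfl fun γ₁ _ => Finset.sum_congr rfl fun γ₂ _ =>
            Finset.sum_congr rfl fun α₄ _ => ?_
          rw [← Finset.mul_sum, key]
      _ = ∑ a, τ α a * ∑ b, ∑ c, Γ a b c * G b c := by
          refine Finset.sum_congr rfl fun a _ => ?_
          rw [Finset.mul_sum]
          refine Finset.sum_congr rfl fun b _ => ?_
          rw [Finset.mul_sum]
          refine Finset.sum_congr rfl fun c _ => ?_
          rw [hG]
          simp only [Finset.mul_sum]
          conv_rhs => rw [reorder4g]
          refine Finset.sum_congr rfl fun α₂ _ => Finset.sum_congr rfl fun γ₁ _ =>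
            Finset.sum_congr rfl fun γ₂ _ => Finset.sum_congr rfl fun α₄ _ => ?_
          ring
  have inv : ∀ v : Fin d → ℝ, ∀ b, (∑ x, σ b x * ∑ a, τ x a * v a) = v b := by
    intro v b
    calc ∑ x, σ b x * ∑ a, τ x a * v a
        = ∑ x, ∑ a, σ b x * τ x a * v a := by
          refine Finset.sum_congr rfl fun x _ => ?_
          rw [Finset.mul_sum]
          exact Finset.sum_congr rfl fun a _ => by ring
      _ = ∑ a, ∑ x, σ b x * τ x a * v a := Finset.sum_comm
      _ = ∑ a, (if b = a then (1:ℝ) else 0) * v a := by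
          refine Finset.sum_congr rfl fun a _ => ?_
          rw [← Finset.sum_mul, hδ]
      _ = v b := by simp
  constructor
  · intro h α
    rw [hA, hB]
    exact Finset.sum_congr rfl fun a _ => by rw [h a]
  · intro h b
    have h2 : ∀ α, (∑ a, τ α a * ∑ β, ∑ γ, Γ a β γ * F β γ)
        = ∑ a, τ α a * ∑ β, ∑ γ, Γ a β γ * G β γ :=
      fun α => (hA α).symm.trans ((h α).trans (hB α))
    calc ∑ β, ∑ γ, Γ b β γ * F β γ
        = ∑ x, σ b x * ∑ a, τ x a * ∑ β, ∑ γ, Γ a β γ * F β γ :=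
          (inv (fun a => ∑ β, ∑ γ, Γ a β γ * F β γ) b).symm
      _ = ∑ x, σ b x * ∑ a, τ x a * ∑ β, ∑ γ, Γ a β γ * G β γ :=
          Finset.sum_congr rfl fun x _ => by rw [h2 x]
      _ = ∑ β, ∑ γ, Γ b β γ * G β γ := inv (fun a => ∑ β, ∑ γ, Γ a β γ * G β γ) b
end

section
/- Let s be an invertible complex d×d matrix and define the complex tensor Γ̂^α_{βγ} := Σ_μ (s⁻¹)^α_μ s^μ_β s^μ_γ. Then for every 1 ≤ α ≤ d one has Σ_{α₁,α₂,α₃,α₄} Γ̂^α_{α₁α₂} Γ̂^{α₁}_{α₃α₄} Γ̂^{α₂}_{α₃α₄} = Σ_{α₁,α₂,α₃,α₄} Γ̂^α_{α₁α₂} Γ̂^{α₁}_{α₃α₄} Γ̂^{α₃}_{α₂α₄}; in fact both sides equal Σ_{μ,α₃,α₄} (s⁻¹)^α_μ (s^μ_{α₃})² (s^μ_{α₄})². -/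
theorem stmt_10 (d : ℕ) (hd : 1 ≤ d)
    (s : Matrix (Fin d) (Fin d) ℂ) (hs : IsUnit s)
    (Γhat : Fin d → Fin d → Fin d → ℂ)
    (hΓhat : ∀ α β γ, Γhat α β γ = ∑ μ, s⁻¹ α μ * s μ β * s μ γ) :
    ∀ α, (∑ α₁, ∑ α₂, ∑ α₃, ∑ α₄,
        Γhat α α₁ α₂ * Γhat α₁ α₃ α₄ * Γhat α₂ α₃ α₄ =
          ∑ μ, ∑ α₃, ∑ α₄, s⁻¹ α μ * (s μ α₃) ^ 2 * (s μ α₄) ^ 2) ∧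
      (∑ α₁, ∑ α₂, ∑ α₃, ∑ α₄,
        Γhat α α₁ α₂ * Γhat α₁ α₃ α₄ * Γhat α₃ α₂ α₄ =
          ∑ μ, ∑ α₃, ∑ α₄, s⁻¹ α μ * (s μ α₃) ^ 2 * (s μ α₄) ^ 2) := by
  intro α
  have hdet : IsUnit s.det := (Matrix.isUnit_iff_isUnit_det s).mp hs
  have hinv : s * s⁻¹ = 1 := Matrix.mul_nonsing_inv s hdet
  have key : ∀ μ β γ : Fin d, ∑ x, s μ x * Γhat x β γ = s μ β * s μ γ := by
    intro μ β γ
    calc ∑ x, s μ x * Γhat x β γ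
        = ∑ x, ∑ ν, s μ x * s⁻¹ x ν * (s ν β * s ν γ) := by
          refine Finset.sum_congr rfl fun x _ => ?_
          rw [hΓhat, Finset.mul_sum]
          exact Finset.sum_congr rfl fun ν _ => by ring
      _ = ∑ ν, (∑ x, s μ x * s⁻¹ x ν) * (s ν β * s ν γ) := by
          rw [Finset.sum_comm]
          exact Finset.sum_congr rfl fun ν _ => (Finset.sum_mul _ _ _).symm
      _ = s μ β * s μ γ := by
          have h1 : ∀ ν, (∑ x, s μ x * s⁻¹ x ν) = (1 : Matrix (Fin d) (Fin d) ℂ) μ ν := by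
            intro ν; rw [← hinv]; simp [Matrix.mul_apply]
          simp [h1, Matrix.one_apply]
  constructor
  · calc
      ∑ α₁, ∑ α₂, ∑ α₃, ∑ α₄, Γhat α α₁ α₂ * Γhat α₁ α₃ α₄ * Γhat α₂ α₃ α₄
        = ∑ α₁, ∑ α₂, Γhat α α₁ α₂ * ∑ α₃, ∑ α₄, Γhat α₁ α₃ α₄ * Γhat α₂ α₃ α₄ := by
          simp only [mul_assoc, Finset.mul_sum]
      _ = ∑ α₁, ∑ α₂, ∑ μ, s⁻¹ α μ * s μ α₁ * s μ α₂ *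
            ∑ α₃, ∑ α₄, Γhat α₁ α₃ α₄ * Γhat α₂ α₃ α₄ := by
          refine Finset.sum_congr rfl fun α₁ _ => Finset.sum_congr rfl fun α₂ _ => ?_
          rw [hΓhat, Finset.sum_mul]
      _ = ∑ μ, ∑ α₁, ∑ α₂, s⁻¹ α μ * s μ α₁ * s μ α₂ *
            ∑ α₃, ∑ α₄, Γhat α₁ α₃ α₄ * Γhat α₂ α₃ α₄ := by
          exact (Finset.sum_congr rfl fun α₁ _ => Finset.sum_comm).trans Finset.sum_comm
      _ = ∑ μ, ∑ α₁, s⁻¹ α μ * s μ α₁ *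
            ∑ α₃, ∑ α₄, Γhat α₁ α₃ α₄ * (s μ α₃ * s μ α₄) := by
          refine Finset.sum_congr rfl fun μ _ => Finset.sum_congr rfl fun α₁ _ => ?_
          calc ∑ α₂, s⁻¹ α μ * s μ α₁ * s μ α₂ *
                  ∑ α₃, ∑ α₄, Γhat α₁ α₃ α₄ * Γhat α₂ α₃ α₄
              = ∑ α₂, ∑ α₃, ∑ α₄, s⁻¹ α μ * s μ α₁ *
                  (Γhat α₁ α₃ α₄ * (s μ α₂ * Γhat α₂ α₃ α₄)) := by
                refine Finset.sum_congr rfl fun α₂ _ => ?_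
                rw [Finset.mul_sum]
                refine Finset.sum_congr rfl fun α₃ _ => ?_
                rw [Finset.mul_sum]
                exact Finset.sum_congr rfl fun α₄ _ => by ring
            _ = ∑ α₃, ∑ α₄, ∑ α₂, s⁻¹ α μ * s μ α₁ *
                  (Γhat α₁ α₃ α₄ * (s μ α₂ * Γhat α₂ α₃ α₄)) := by
                exact Finset.sum_comm.trans (Finset.sum_congr rfl fun α₃ _ => Finset.sum_comm)
            _ = ∑ α₃, ∑ α₄, s⁻¹ α μ * s μ α₁ *
                  (Γhat α₁ α₃ α₄ * (s μ α₃ * s μ α₄)) := by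
                refine Finset.sum_congr rfl fun α₃ _ => Finset.sum_congr rfl fun α₄ _ => ?_
                rw [← Finset.mul_sum, ← Finset.mul_sum, key]
            _ = s⁻¹ α μ * s μ α₁ * ∑ α₃, ∑ α₄, Γhat α₁ α₃ α₄ * (s μ α₃ * s μ α₄) := by
                rw [Finset.mul_sum]
                exact Finset.sum_congr rfl fun α₃ _ => by rw [Finset.mul_sum]
      _ = ∑ μ, ∑ α₃, ∑ α₄, s⁻¹ α μ * (s μ α₃) ^ 2 * (s μ α₄) ^ 2 := by
          refine Finset.sum_congr rfl fun μ _ => ?_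
          calc ∑ α₁, s⁻¹ α μ * s μ α₁ * ∑ α₃, ∑ α₄, Γhat α₁ α₃ α₄ * (s μ α₃ * s μ α₄)
              = ∑ α₁, ∑ α₃, ∑ α₄, s⁻¹ α μ *
                  (s μ α₃ * s μ α₄ * (s μ α₁ * Γhat α₁ α₃ α₄)) := by
                refine Finset.sum_congr rfl fun α₁ _ => ?_
                rw [Finset.mul_sum]
                refine Finset.sum_congr rfl fun α₃ _ => ?_
                rw [Finset.mul_sum]
                exact Finset.sum_congr rfl fun α₄ _ => by ring
            _ = ∑ α₃, ∑ α₄, ∑ α₁, s⁻¹ α μ *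
                  (s μ α₃ * s μ α₄ * (s μ α₁ * Γhat α₁ α₃ α₄)) := by
                exact Finset.sum_comm.trans (Finset.sum_congr rfl fun α₃ _ => Finset.sum_comm)
            _ = ∑ α₃, ∑ α₄, s⁻¹ α μ * (s μ α₃) ^ 2 * (s μ α₄) ^ 2 := by
                refine Finset.sum_congr rfl fun α₃ _ => Finset.sum_congr rfl fun α₄ _ => ?_
                rw [← Finset.mul_sum, ← Finset.mul_sum, key]
                ring
  · calc
      ∑ α₁, ∑ α₂, ∑ α₃, ∑ α₄, Γhat α α₁ α₂ * Γhat α₁ α₃ α₄ * Γhat α₃ α₂ α₄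
        = ∑ α₁, ∑ α₂, Γhat α α₁ α₂ * ∑ α₃, ∑ α₄, Γhat α₁ α₃ α₄ * Γhat α₃ α₂ α₄ := by
          simp only [mul_assoc, Finset.mul_sum]
      _ = ∑ α₁, ∑ α₂, ∑ μ, s⁻¹ α μ * s μ α₁ * s μ α₂ *
            ∑ α₃, ∑ α₄, Γhat α₁ α₃ α₄ * Γhat α₃ α₂ α₄ := by
          refine Finset.sum_congr rfl fun α₁ _ => Finset.sum_congr rfl fun α₂ _ => ?_
          rw [hΓhat, Finset.sum_mul]
      _ = ∑ μ, ∑ α₂, ∑ α₁, s⁻¹ α μ * s μ α₁ * s μ α₂ *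
            ∑ α₃, ∑ α₄, Γhat α₁ α₃ α₄ * Γhat α₃ α₂ α₄ := by
          exact Finset.sum_comm.trans
            ((Finset.sum_congr rfl fun α₂ _ => Finset.sum_comm).trans Finset.sum_comm)
      _ = ∑ μ, ∑ α₂, ∑ α₄, ∑ α₃, s⁻¹ α μ * s μ α₂ *
            (s μ α₄ * (s μ α₃ * Γhat α₃ α₂ α₄)) := by
          refine Finset.sum_congr rfl fun μ _ => Finset.sum_congr rfl fun α₂ _ => ?_
          calc ∑ α₁, s⁻¹ α μ * s μ α₁ * s μ α₂ *
                  ∑ α₃, ∑ α₄, Γhat α₁ α₃ α₄ * Γhat α₃ α₂ α₄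
              = ∑ α₁, ∑ α₃, ∑ α₄, s⁻¹ α μ * s μ α₂ *
                  (Γhat α₃ α₂ α₄ * (s μ α₁ * Γhat α₁ α₃ α₄)) := by
                refine Finset.sum_congr rfl fun α₁ _ => ?_
                rw [Finset.mul_sum]
                refine Finset.sum_congr rfl fun α₃ _ => ?_
                rw [Finset.mul_sum]
                exact Finset.sum_congr rfl fun α₄ _ => by ring
            _ = ∑ α₃, ∑ α₄, ∑ α₁, s⁻¹ α μ * s μ α₂ *
                  (Γhat α₃ α₂ α₄ * (s μ α₁ * Γhat α₁ α₃ α₄)) := by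
                exact Finset.sum_comm.trans (Finset.sum_congr rfl fun α₃ _ => Finset.sum_comm)
            _ = ∑ α₃, ∑ α₄, s⁻¹ α μ * s μ α₂ *
                  (Γhat α₃ α₂ α₄ * (s μ α₃ * s μ α₄)) := by
                refine Finset.sum_congr rfl fun α₃ _ => Finset.sum_congr rfl fun α₄ _ => ?_
                rw [← Finset.mul_sum, ← Finset.mul_sum, key]
            _ = ∑ α₄, ∑ α₃, s⁻¹ α μ * s μ α₂ *
                  (s μ α₄ * (s μ α₃ * Γhat α₃ α₂ α₄)) := by
                rw [Finset.sum_comm]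
                exact Finset.sum_congr rfl fun α₄ _ =>
                  Finset.sum_congr rfl fun α₃ _ => by ring
      _ = ∑ μ, ∑ α₂, ∑ α₄, s⁻¹ α μ * (s μ α₂) ^ 2 * (s μ α₄) ^ 2 := by
          refine Finset.sum_congr rfl fun μ _ => Finset.sum_congr rfl fun α₂ _ =>
            Finset.sum_congr rfl fun α₄ _ => ?_
          rw [← Finset.mul_sum, ← Finset.mul_sum, key]
          ring
      _ = ∑ μ, ∑ α₃, ∑ α₄, s⁻¹ α μ * (s μ α₃) ^ 2 * (s μ α₄) ^ 2 := rfl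
end

section
/- For every integer k ≠ 0 and all real t, s, one has ∫_ℝ h_{t−u}(k) · h_{s−u}(−k) du = exp(−2π²k²|t−s|). -/
open MeasureTheory Set

lemma aux_exp_Iio (c m : ℝ) (hc : 0 < c) :
    (∫ u in Set.Iio m, Real.exp (c * u)) = Real.exp (c * m) / c := by
  rw [← MeasureTheory.integral_Iic_eq_integral_Iio]
  have h1 : (∫ u in Set.Iic m, Real.exp (c * u))
      = ∫ x in Set.Iic m, (fun y => Real.exp (-(c * y))) (-x) := by
    apply MeasureTheory.setIntegral_congr_fun measurableSet_Iic
    intro x _; simp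
  rw [h1, integral_comp_neg_Iic m (fun y => Real.exp (-(c * y)))]
  have h2 : (∫ x in Set.Ioi (-m), Real.exp (-(c * x)))
      = ∫ x in Set.Ioi (-m), (fun y => Real.exp (-y)) (c * x) := rfl
  rw [h2, MeasureTheory.integral_comp_mul_left_Ioi (fun y => Real.exp (-y)) (-m) hc, smul_eq_mul,
    show c * (-m) = -(c * m) by ring, integral_exp_neg_Ioi, neg_neg, div_eq_inv_mul]

theorem stmt_12
    (H : ℝ → ℤ → ℝ)
    (hH : ∀ r k, H r k =
      if 0 < r ∧ k ≠ 0 then Real.exp (-(2 * Real.pi ^ 2 * (k : ℝ) ^ 2 * r)) else 0)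
    (h : ℝ → ℤ → ℂ)
    (hh : ∀ r k, h r k = 2 * Real.pi * Complex.I * (k : ℂ) * (H r k : ℂ))
    (k : ℤ) (hk : k ≠ 0) (t s : ℝ) :
    (∫ u : ℝ, h (t - u) k * h (s - u) (-k)) =
      (Real.exp (-(2 * Real.pi ^ 2 * (k : ℝ) ^ 2 * |t - s|)) : ℂ) := by
  have hkR : (k : ℝ) ≠ 0 := Int.cast_ne_zero.mpr hk
  set a : ℝ := 2 * Real.pi ^ 2 * (k : ℝ) ^ 2 with ha_def
  have ha : 0 < a := by have := Real.pi_pos; positivity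
  set m : ℝ := min t s with hm_def
  have hHneg : ∀ r, H r (-k) = H r k := by
    intro r; rw [hH, hH]; simp [hk]
  have hpt : ∀ u : ℝ,
      h (t - u) k * h (s - u) (-k) = ((2 * a * (H (t - u) k * H (s - u) (-k)) : ℝ) : ℂ) := by
    intro u
    rw [hh, hh]
    push_cast
    ring_nf
    rw [Complex.I_sq]
    push_cast
    rw [ha_def]; push_cast
    ring
  simp_rw [hpt]
  have hcast : (∫ u : ℝ, ((2 * a * (H (t - u) k * H (s - u) (-k)) : ℝ) : ℂ))
      = Complex.ofReal (∫ u : ℝ, 2 * a * (H (t - u) k * H (s - u) (-k))) := integral_ofReal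
  rw [hcast, Complex.ofReal_inj]
  have hg : ∀ u : ℝ, 2 * a * (H (t - u) k * H (s - u) (-k))
      = Set.indicator (Set.Iio m)
          (fun u => (2 * a * Real.exp (-(a * (t + s)))) * Real.exp (2 * a * u)) u := by
    intro u
    rw [hHneg, hH, hH]
    by_cases hu : u < m
    · have h1 : 0 < t - u := by simp only [hm_def, lt_min_iff] at hu; linarith [hu.1]
      have h2 : 0 < s - u := by simp only [hm_def, lt_min_iff] at hu; linarith [hu.2]
      rw [Set.indicator_of_mem (Set.mem_Iio.mpr hu), if_pos ⟨h1, hk⟩, if_pos ⟨h2, hk⟩,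
        ← Real.exp_add,
        show -(2 * Real.pi ^ 2 * (k:ℝ) ^ 2 * (t - u)) + -(2 * Real.pi ^ 2 * (k:ℝ) ^ 2 * (s - u))
          = -(a * (t + s)) + 2 * a * u from by rw [ha_def]; ring,
        Real.exp_add]
      ring
    · rw [Set.indicator_of_notMem (by simpa using hu)]
      rw [hm_def, lt_min_iff, not_and_or] at hu
      rcases hu with h1 | h1 <;> simp [sub_pos, h1]
  simp_rw [hg]
  rw [MeasureTheory.integral_indicator measurableSet_Iio,
    MeasureTheory.integral_const_mul, aux_exp_Iio _ _ (by linarith : (0:ℝ) < 2 * a)]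
  have habs : -(a * (t + s)) + 2 * a * m = -(a * |t - s|) := by
    rcases le_total t s with hts | hts
    · rw [hm_def, min_eq_left hts, abs_of_nonpos (by linarith)]; ring
    · rw [hm_def, min_eq_right hts, abs_of_nonneg (by linarith)]; ring
  have h2a : (2 * a) ≠ 0 := by linarith
  field_simp
  rw [← habs, Real.exp_add]
end

section
/- Let k₁, k₂ be integers with k₁ ≠ 0, k₂ ≠ 0 and k₁ + k₂ ≠ 0. Then ∫₀^∞ ∫₀^∞ exp(−2π²(k₁+k₂)²(r₁+r₂)) · exp(−2π²(k₁²+k₂²)|r₁−r₂|) dr₁ dr₂ = 1 / (8π⁴ (k₁²+k₁k₂+k₂²)(k₁+k₂)²). -/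
open MeasureTheory Set Filter

private lemma aux_exp_deriv (c : ℝ) (hc : c ≠ 0) (t : ℝ) :
    HasDerivAt (fun s => Real.exp (c * s) / c) (Real.exp (c * t)) t := by
  have h1 : HasDerivAt (fun s : ℝ => c * s) c t := by
    simpa using (hasDerivAt_id t).const_mul c
  have h2 := (Real.hasDerivAt_exp (c * t)).comp t h1
  have h3 := h2.div_const c
  simpa [mul_div_assoc, mul_div_cancel_right₀ _ hc] using h3

private lemma aux_integral_exp_mul (c : ℝ) (hc : c ≠ 0) (x y : ℝ) :
    ∫ t in x..y, Real.exp (c * t) = (Real.exp (c * y) - Real.exp (c * x)) / c := by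
  rw [intervalIntegral.integral_eq_sub_of_hasDerivAt (fun t _ => aux_exp_deriv c hc t)
    ((Real.continuous_exp.comp (continuous_const.mul continuous_id)).intervalIntegrable x y)]
  ring

private lemma aux_integrable_exp_neg (c : ℝ) (hc : 0 < c) (x : ℝ) :
    IntegrableOn (fun t => Real.exp (-(c * t))) (Set.Ioi x) := by
  simpa [neg_mul] using exp_neg_integrableOn_Ioi x hc

private lemma aux_integral_exp_neg_Ioi (c : ℝ) (hc : 0 < c) (x : ℝ) :
    ∫ t in Set.Ioi x, Real.exp (-(c * t)) = Real.exp (-(c * x)) / c := by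
  have hderiv : ∀ t ∈ Set.Ici x, HasDerivAt (fun s => -(Real.exp (-(c * s)) / c))
      (Real.exp (-(c * t))) t := by
    intro t _
    have h1 : HasDerivAt (fun s : ℝ => -c * s) (-c) t := by
      simpa using (hasDerivAt_id t).const_mul (-c)
    have h2 := ((Real.hasDerivAt_exp (-c * t)).comp t h1).div_const c
    have h3 := h2.neg
    have hc' : c ≠ 0 := ne_of_gt hc
    convert h3 using 1
    · ext s; simp [Function.comp, neg_mul]
    · ext s; simp [Function.comp, neg_mul]
    · ext s; simp [Function.comp, neg_mul]
    · rw [neg_mul]; field_simp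
  have htend : Tendsto (fun s => -(Real.exp (-(c * s)) / c)) atTop (nhds 0) := by
    have h1 : Tendsto (fun s : ℝ => -(c * s)) atTop atBot := by
      apply tendsto_neg_atBot_iff.mpr
      exact Tendsto.const_mul_atTop hc tendsto_id
    have h2 := (Real.tendsto_exp_atBot).comp h1
    have h3 := (h2.div_const c).neg
    simpa using h3
  have := integral_Ioi_of_hasDerivAt_of_tendsto' hderiv (aux_integrable_exp_neg c hc x) htend
  rw [this]; ring

private lemma aux_inner (a b : ℝ) (ha : 0 < a) (hb : 0 < b) (hab : b - a ≠ 0) (r₂ : ℝ)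
    (hr₂ : 0 < r₂) :
    (∫ r₁ in Set.Ioi (0 : ℝ), Real.exp (-(a * (r₁ + r₂))) * Real.exp (-(b * |r₁ - r₂|))) =
      (Real.exp (-(2 * a * r₂)) - Real.exp (-((a + b) * r₂))) / (b - a)
        + Real.exp (-(2 * a * r₂)) / (a + b) := by
  have hsplit : Set.Ioc (0 : ℝ) r₂ ∪ Set.Ioi r₂ = Set.Ioi (0 : ℝ) := Set.Ioc_union_Ioi_eq_Ioi hr₂.le
  have hcont : Continuous fun r₁ => Real.exp (-(a * (r₁ + r₂))) * Real.exp (-(b * |r₁ - r₂|)) := by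
    fun_prop
  have hint1 : IntegrableOn (fun r₁ => Real.exp (-(a * (r₁ + r₂))) * Real.exp (-(b * |r₁ - r₂|)))
      (Set.Ioc (0 : ℝ) r₂) := hcont.integrableOn_Ioc
  have hint2 : IntegrableOn (fun r₁ => Real.exp (-(a * (r₁ + r₂))) * Real.exp (-(b * |r₁ - r₂|)))
      (Set.Ioi r₂) := by
    apply Integrable.mono' (g := fun r₁ => Real.exp ((b - a) * r₂) * Real.exp (-((a + b) * r₁)))
    · exact ((aux_integrable_exp_neg (a + b) (by linarith) r₂).const_mul _)
    · exact hcont.aestronglyMeasurable.restrict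
    · filter_upwards [ae_restrict_mem measurableSet_Ioi] with r₁ hr₁
      have hr : r₂ ≤ r₁ := le_of_lt (Set.mem_Ioi.mp hr₁)
      rw [abs_of_nonneg (by linarith : (0:ℝ) ≤ r₁ - r₂), ← Real.exp_add,
        Real.norm_eq_abs, Real.abs_exp, ← Real.exp_add]
      exact le_of_eq (by congr 1; ring)
  rw [← hsplit, setIntegral_union (Set.Ioc_disjoint_Ioi le_rfl) measurableSet_Ioi hint1 hint2]
  have e1 : (∫ r₁ in Set.Ioc (0 : ℝ) r₂, Real.exp (-(a * (r₁ + r₂))) * Real.exp (-(b * |r₁ - r₂|)))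
      = (Real.exp (-(2 * a * r₂)) - Real.exp (-((a + b) * r₂))) / (b - a) := by
    rw [setIntegral_congr_fun measurableSet_Ioc
      (g := fun r₁ => Real.exp (-((a + b) * r₂)) * Real.exp ((b - a) * r₁)) ?_]
    · rw [integral_const_mul, ← intervalIntegral.integral_of_le hr₂.le,
        aux_integral_exp_mul (b - a) hab 0 r₂]
      rw [mul_comm, div_mul_eq_mul_div]
      congr 1
      rw [sub_mul, mul_zero, Real.exp_zero, one_mul, ← Real.exp_add]
      congr 2
      ring
    · intro r₁ hr₁
      have habs : |r₁ - r₂| = r₂ - r₁ := by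
        rw [abs_of_nonpos (by linarith [hr₁.2] : r₁ - r₂ ≤ 0)]; ring
      dsimp only
      rw [habs, ← Real.exp_add, ← Real.exp_add]
      congr 1
      ring
  have e2 : (∫ r₁ in Set.Ioi r₂, Real.exp (-(a * (r₁ + r₂))) * Real.exp (-(b * |r₁ - r₂|)))
      = Real.exp (-(2 * a * r₂)) / (a + b) := by
    rw [setIntegral_congr_fun measurableSet_Ioi
      (g := fun r₁ => Real.exp ((b - a) * r₂) * Real.exp (-((a + b) * r₁))) ?_]
    · rw [integral_const_mul, aux_integral_exp_neg_Ioi (a + b) (by linarith) r₂]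
      rw [mul_div_assoc', ← Real.exp_add]
      congr 2
      ring
    · intro r₁ hr₁
      have habs : |r₁ - r₂| = r₁ - r₂ :=
        abs_of_nonneg (by linarith [Set.mem_Ioi.mp hr₁] : (0:ℝ) ≤ r₁ - r₂)
      dsimp only
      rw [habs, ← Real.exp_add, ← Real.exp_add]
      congr 1
      ring
  rw [e1, e2]

private lemma aux_main (a b : ℝ) (ha : 0 < a) (hb : 0 < b) (hab : b - a ≠ 0) :
    (∫ r₂ in Set.Ioi (0 : ℝ), ∫ r₁ in Set.Ioi (0 : ℝ),
        Real.exp (-(a * (r₁ + r₂))) * Real.exp (-(b * |r₁ - r₂|))) = 1 / (a * (a + b)) := by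
  rw [setIntegral_congr_fun measurableSet_Ioi
    (g := fun r₂ => (Real.exp (-(2 * a * r₂)) - Real.exp (-((a + b) * r₂))) / (b - a)
        + Real.exp (-(2 * a * r₂)) / (a + b))
    (fun r₂ hr₂ => aux_inner a b ha hb hab r₂ hr₂)]
  have i1 := aux_integrable_exp_neg (2 * a) (by linarith) 0
  have i2 := aux_integrable_exp_neg (a + b) (by linarith) 0
  have j1 : Integrable (fun r₂ => (Real.exp (-(2 * a * r₂)) - Real.exp (-((a + b) * r₂))) / (b - a))
      (MeasureTheory.volume.restrict (Set.Ioi (0:ℝ))) := by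
    exact (i1.sub i2).div_const _
  have j2 : Integrable (fun r₂ => Real.exp (-(2 * a * r₂)) / (a + b))
      (MeasureTheory.volume.restrict (Set.Ioi (0:ℝ))) := by
    exact i1.div_const _
  rw [integral_add j1 j2,
    integral_div, integral_div, integral_sub i1 i2,
    aux_integral_exp_neg_Ioi (2 * a) (by linarith) 0,
    aux_integral_exp_neg_Ioi (a + b) (by linarith) 0]
  simp only [mul_zero, neg_zero, Real.exp_zero]
  have h2a : (2 : ℝ) * a ≠ 0 := by positivity
  have hapb : a + b ≠ 0 := by positivity
  field_simp
  ring

theorem stmt_13 (k₁ k₂ : ℤ) (h1 : k₁ ≠ 0) (h2 : k₂ ≠ 0) (h12 : k₁ + k₂ ≠ 0) :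
    (∫ r₂ in Set.Ioi (0 : ℝ), ∫ r₁ in Set.Ioi (0 : ℝ),
        Real.exp (-(2 * Real.pi ^ 2 * ((k₁ : ℝ) + (k₂ : ℝ)) ^ 2 * (r₁ + r₂))) *
        Real.exp (-(2 * Real.pi ^ 2 * ((k₁ : ℝ) ^ 2 + (k₂ : ℝ) ^ 2) * |r₁ - r₂|))) =
      1 / (8 * Real.pi ^ 4 *
        ((k₁ : ℝ) ^ 2 + (k₁ : ℝ) * (k₂ : ℝ) + (k₂ : ℝ) ^ 2) *
        ((k₁ : ℝ) + (k₂ : ℝ)) ^ 2) := by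
  have hk1 : (k₁ : ℝ) ≠ 0 := Int.cast_ne_zero.mpr h1
  have hk2 : (k₂ : ℝ) ≠ 0 := Int.cast_ne_zero.mpr h2
  have hk12 : (k₁ : ℝ) + (k₂ : ℝ) ≠ 0 := by
    rw [← Int.cast_add]; exact Int.cast_ne_zero.mpr h12
  have hpi := Real.pi_pos
  have ha : (0 : ℝ) < 2 * Real.pi ^ 2 * ((k₁ : ℝ) + (k₂ : ℝ)) ^ 2 := by positivity
  have hb : (0 : ℝ) < 2 * Real.pi ^ 2 * ((k₁ : ℝ) ^ 2 + (k₂ : ℝ) ^ 2) := by positivity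
  have hab : 2 * Real.pi ^ 2 * ((k₁ : ℝ) ^ 2 + (k₂ : ℝ) ^ 2)
      - 2 * Real.pi ^ 2 * ((k₁ : ℝ) + (k₂ : ℝ)) ^ 2 ≠ 0 := by
    have : 2 * Real.pi ^ 2 * ((k₁ : ℝ) ^ 2 + (k₂ : ℝ) ^ 2)
        - 2 * Real.pi ^ 2 * ((k₁ : ℝ) + (k₂ : ℝ)) ^ 2
        = -(4 * Real.pi ^ 2 * (k₁ : ℝ) * (k₂ : ℝ)) := by ring
    rw [this]
    intro h
    have := neg_eq_zero.mp h
    have hne : (4 : ℝ) * Real.pi ^ 2 * (k₁ : ℝ) * (k₂ : ℝ) ≠ 0 := by positivity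
    exact hne this
  rw [aux_main _ _ ha hb hab]
  congr 1
  ring
end

section
/- Let λ₁, λ₂ be real numbers with λ₁ ≠ 0 and λ₁λ₂ > 0. Define the tensor Γ on {1,2} by Γ¹₁₁ = λ₁, Γ¹₂₂ = λ₂, Γ¹₁₂ = Γ¹₂₁ = 0, Γ²₁₂ = Γ²₂₁ = λ₁, Γ²₁₁ = Γ²₂₂ = 0, and the matrix s := [[λ₁, √(λ₁λ₂)], [λ₁, −√(λ₁λ₂)]]. Then s is invertible and Γ^α_{βγ} = Σ_{α'} (s⁻¹)^α_{α'} s^{α'}_β s^{α'}_γ for all α,β,γ ∈ {1,2}. -/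
theorem stmt_17 (l₁ l₂ : ℝ) (h1 : l₁ ≠ 0) (h2 : 0 < l₁ * l₂)
    (Γ : Fin 2 → Fin 2 → Fin 2 → ℝ)
    (hΓ : Γ 0 0 0 = l₁ ∧ Γ 0 1 1 = l₂ ∧ Γ 0 0 1 = 0 ∧ Γ 0 1 0 = 0 ∧
          Γ 1 0 1 = l₁ ∧ Γ 1 1 0 = l₁ ∧ Γ 1 0 0 = 0 ∧ Γ 1 1 1 = 0)
    (s : Matrix (Fin 2) (Fin 2) ℝ)
    (hs : s = !![l₁, Real.sqrt (l₁ * l₂); l₁, -Real.sqrt (l₁ * l₂)]) :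
    IsUnit s ∧ ∀ α β γ, Γ α β γ = ∑ α', s⁻¹ α α' * s α' β * s α' γ := by
  obtain ⟨e1, e2, e3, e4, e5, e6, e7, e8⟩ := hΓ
  set r := Real.sqrt (l₁ * l₂) with hr
  have hr2 : r * r = l₁ * l₂ := Real.mul_self_sqrt h2.le
  have hrpos : 0 < r := Real.sqrt_pos.mpr h2
  have hrne : r ≠ 0 := hrpos.ne'
  have hinv : s⁻¹ = !![1/(2*l₁), 1/(2*l₁); 1/(2*r), -(1/(2*r))] := by
    apply Matrix.inv_eq_right_inv
    rw [hs]
    ext i j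
    fin_cases i <;> fin_cases j <;>
      simp [Matrix.mul_apply, Fin.sum_univ_two, Matrix.one_apply] <;> field_simp <;> ring
  have hu : IsUnit s := by
    apply Matrix.isUnit_iff_isUnit_det s |>.mpr
    rw [hs, Matrix.det_fin_two_of]
    have : l₁ * -r - r * l₁ = -(2 * l₁ * r) := by ring
    rw [this]
    simpa using mul_ne_zero (mul_ne_zero (two_ne_zero (α := ℝ)) h1) hrne
  refine ⟨hu, ?_⟩
  intro α β γ
  fin_cases α <;> fin_cases β <;> fin_cases γ <;>
    rw [hinv, hs] <;>
    simp only [e1, e2, e3, e4, e5, e6, e7, e8, Fin.zero_eta, Fin.mk_one, Fin.sum_univ_two,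
      Matrix.cons_val', Matrix.cons_val_zero, Matrix.cons_val_one, Matrix.head_cons,
      Matrix.head_fin_const, Matrix.cons_val_fin_one, Fin.isValue, Matrix.of_apply] <;>
    field_simp <;> nlinarith [hr2]
end

section
/- Define the tensor Γ on {1,2} by Γ¹ = [[2,1],[1,1]] and Γ² = [[1,1],[1,2]] (i.e. Γ¹₁₁ = 2, Γ¹₁₂ = Γ¹₂₁ = 1, Γ¹₂₂ = 1, Γ²₁₁ = 1, Γ²₁₂ = Γ²₂₁ = 1, Γ²₂₂ = 2). Then (a) Γ is fully symmetric, i.e. Γ^α_{βγ} is invariant under all permutations of (α,β,γ); but (b) there exists no invertible complex 2×2 matrix s such that Γ^α_{βγ} = Σ_{α'} (s⁻¹)^α_{α'} s^{α'}_β s^{α'}_γ for all α,β,γ ∈ {1,2}. -/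
theorem stmt_18 (Γ : Fin 2 → Fin 2 → Fin 2 → ℝ)
    (hΓ : Γ 0 0 0 = 2 ∧ Γ 0 0 1 = 1 ∧ Γ 0 1 0 = 1 ∧ Γ 0 1 1 = 1 ∧
          Γ 1 0 0 = 1 ∧ Γ 1 0 1 = 1 ∧ Γ 1 1 0 = 1 ∧ Γ 1 1 1 = 2) :
    (∀ α β γ, Γ α β γ = Γ α γ β ∧ Γ α β γ = Γ β α γ) ∧
      ¬ ∃ s : Matrix (Fin 2) (Fin 2) ℂ, IsUnit s ∧
        ∀ α β γ, (Γ α β γ : ℂ) = ∑ α', s⁻¹ α α' * s α' β * s α' γ := by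
  obtain ⟨h1, h2, h3, h4, h5, h6, h7, h8⟩ := hΓ
  constructor
  · intro α β γ
    fin_cases α <;> fin_cases β <;> fin_cases γ <;>
      simp_all
  · rintro ⟨s, hs, h⟩
    have hdet : IsUnit s.det := (Matrix.isUnit_iff_isUnit_det s).mp hs
    have hinv : s * s⁻¹ = 1 := Matrix.mul_nonsing_inv s hdet
    have key : ∀ i β γ : Fin 2, s i β * s i γ =
        s i 0 * ((Γ 0 β γ : ℂ)) + s i 1 * ((Γ 1 β γ : ℂ)) := by
      intro i β γ
      have e0 : s i 0 * s⁻¹ 0 0 + s i 1 * s⁻¹ 1 0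
          = (1 : Matrix (Fin 2) (Fin 2) ℂ) i 0 := by
        rw [← hinv, Matrix.mul_apply, Fin.sum_univ_two]
      have e1 : s i 0 * s⁻¹ 0 1 + s i 1 * s⁻¹ 1 1
          = (1 : Matrix (Fin 2) (Fin 2) ℂ) i 1 := by
        rw [← hinv, Matrix.mul_apply, Fin.sum_univ_two]
      have h0 := h 0 β γ
      have h1' := h 1 β γ
      rw [Fin.sum_univ_two] at h0 h1'
      fin_cases i <;> simp only [Fin.mk_zero, Fin.mk_one] at * <;>
        simp only [Matrix.one_apply] at e0 e1 <;> norm_num at e0 e1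
      · linear_combination (-(s 0 0)) * h0 - (s 0 1) * h1' -
          (s 0 β * s 0 γ) * e0 - (s 1 β * s 1 γ) * e1
      · linear_combination (-(s 1 0)) * h0 - (s 1 1) * h1' -
          (s 0 β * s 0 γ) * e0 - (s 1 β * s 1 γ) * e1
    -- the three quadratic equations for each row
    have rowzero : ∀ i : Fin 2, s i 0 = 0 ∧ s i 1 = 0 := by
      intro i
      have hA := key i 0 0
      have hB := key i 0 1
      have hC := key i 1 1
      rw [h1, h5] at hA
      rw [h2, h6] at hB
      rw [h4, h8] at hC
      push_cast at hA hB hC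
      set p := s i 0 with hp'
      set q := s i 1 with hq'
      have hp : p = 0 := by
        linear_combination ((p - p*q - 1 + q)/2) * hA + ((p^2 - 2*p - 1)/2) * hB +
          ((1 - p)/2) * hC
      have hq : q = 0 := by
        linear_combination (p - 2) * hp - hA
      exact ⟨hp, hq⟩
    have d0 := (rowzero 0).1
    have d1 := (rowzero 0).2
    have d2 := (rowzero 1).1
    have d3 := (rowzero 1).2
    rw [Matrix.det_fin_two, d0, d1, d2, d3] at hdet
    simp at hdet
end

section
/- Under the trilinear condition, the matrices F and G coincide and are given by F^{βγ} = G^{βγ} = Σ_{α₁,α₂,β₁,β₂} σ^β_{α₁} σ^γ_{α₂} Γ̂^{α₁}_{β₁β₂} Γ̂^{α₂}_{β₁β₂} for all 1 ≤ β,γ ≤ d. -/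
private lemma sum_rot3 {ι : Type*} [Fintype ι] (f : ι → ι → ι → ℝ) :
    ∑ a, ∑ b, ∑ c, f a b c = ∑ b, ∑ c, ∑ a, f a b c := by
  rw [Finset.sum_comm]
  exact Finset.sum_congr rfl fun b _ => Finset.sum_comm

private lemma sum_rot4 {ι : Type*} [Fintype ι] (f : ι → ι → ι → ι → ℝ) :
    ∑ a, ∑ b, ∑ c, ∑ e, f a b c e = ∑ c, ∑ e, ∑ a, ∑ b, f a b c e := by
  calc ∑ a, ∑ b, ∑ c, ∑ e, f a b c e
      = ∑ a, ∑ c, ∑ e, ∑ b, f a b c e :=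
        Finset.sum_congr rfl fun a _ => sum_rot3 (fun b c e => f a b c e)
    _ = ∑ c, ∑ e, ∑ a, ∑ b, f a b c e := sum_rot3 (fun a c e => ∑ b, f a b c e)

private lemma sum_rot4' {ι : Type*} [Fintype ι] (f : ι → ι → ι → ι → ℝ) :
    ∑ a, ∑ b, ∑ c, ∑ e, f a b c e = ∑ b, ∑ c, ∑ e, ∑ a, f a b c e := by
  rw [sum_rot3 (fun a b c => ∑ e, f a b c e)]
  exact Finset.sum_congr rfl fun b _ => Finset.sum_congr rfl fun c _ => Finset.sum_comm

theorem stmt_19 (d : ℕ) (hd : 1 ≤ d)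
    (Γ : Fin d → Fin d → Fin d → ℝ)
    (hΓsym : ∀ α β γ, Γ α β γ = Γ α γ β)
    (σ τ : Matrix (Fin d) (Fin d) ℝ)
    (hστ : σ * τ = 1) (hτσ : τ * σ = 1)
    (Γhat : Fin d → Fin d → Fin d → ℝ)
    (hΓhat : ∀ α β γ, Γhat α β γ =
      ∑ α', ∑ β', ∑ γ', τ α α' * Γ α' β' γ' * σ β' β * σ γ' γ)
    (htri : ∀ α β γ, Γhat α β γ = Γhat α γ β ∧ Γhat α β γ = Γhat β γ α)
    (E : Fin d → Fin d → Fin d → ℝ)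
    (hE : ∀ α β₁ β₂, E α β₁ β₂ = ∑ γ₁, ∑ γ₂, Γ α γ₁ γ₂ * σ γ₁ β₁ * σ γ₂ β₂)
    (F G : Fin d → Fin d → ℝ)
    (hF : ∀ β γ, F β γ = ∑ γ₁, ∑ γ₂, E β γ₁ γ₂ * E γ γ₁ γ₂)
    (hG : ∀ β γ, G β γ = ∑ β₁, ∑ β₂, ∑ γ₁, ∑ γ₂,
      Γ β γ₁ γ₂ * E γ₁ β₁ β₂ * σ γ₂ β₂ * σ γ β₁) :
    ∀ β γ, F β γ = G β γ ∧
      F β γ = ∑ α₁, ∑ α₂, ∑ β₁, ∑ β₂,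
        σ β α₁ * σ γ α₂ * Γhat α₁ β₁ β₂ * Γhat α₂ β₁ β₂ := by
  -- key: E in terms of Γhat
  have key : ∀ α b c, E α b c = ∑ a, σ α a * Γhat a b c := by
    intro α b c
    symm
    have hΓhat' : ∀ a, Γhat a b c
        = ∑ α', τ a α' * (∑ β', ∑ γ', Γ α' β' γ' * σ β' b * σ γ' c) := by
      intro a
      rw [hΓhat]
      refine Finset.sum_congr rfl fun α' _ => ?_
      rw [Finset.mul_sum]
      refine Finset.sum_congr rfl fun β' _ => ?_
      rw [Finset.mul_sum]
      exact Finset.sum_congr rfl fun γ' _ => by ring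
    calc ∑ a, σ α a * Γhat a b c
        = ∑ a, ∑ α', σ α a * τ a α' *
            (∑ β', ∑ γ', Γ α' β' γ' * σ β' b * σ γ' c) := by
          refine Finset.sum_congr rfl fun a _ => ?_
          rw [hΓhat' a, Finset.mul_sum]
          exact Finset.sum_congr rfl fun α' _ => by ring
      _ = ∑ α', (∑ a, σ α a * τ a α') *
            (∑ β', ∑ γ', Γ α' β' γ' * σ β' b * σ γ' c) := by
          rw [Finset.sum_comm]
          exact Finset.sum_congr rfl fun α' _ => (Finset.sum_mul _ _ _).symm
      _ = ∑ α', (1 : Matrix (Fin d) (Fin d) ℝ) α α' *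
            (∑ β', ∑ γ', Γ α' β' γ' * σ β' b * σ γ' c) := by
          simp only [← hστ, Matrix.mul_apply]
      _ = E α b c := by
          simp [Matrix.one_apply, hE]
  intro β γ
  -- F in terms of Γhat
  have hF' : F β γ = ∑ α₁, ∑ α₂, ∑ β₁, ∑ β₂,
      σ β α₁ * σ γ α₂ * Γhat α₁ β₁ β₂ * Γhat α₂ β₁ β₂ := by
    rw [hF]
    calc ∑ γ₁, ∑ γ₂, E β γ₁ γ₂ * E γ γ₁ γ₂
        = ∑ γ₁, ∑ γ₂, ∑ α₁, ∑ α₂,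
            σ β α₁ * σ γ α₂ * Γhat α₁ γ₁ γ₂ * Γhat α₂ γ₁ γ₂ := by
          refine Finset.sum_congr rfl fun γ₁ _ => Finset.sum_congr rfl fun γ₂ _ => ?_
          rw [key, key, Finset.sum_mul_sum]
          exact Finset.sum_congr rfl fun α₁ _ => Finset.sum_congr rfl fun α₂ _ => by ring
      _ = ∑ α₁, ∑ α₂, ∑ γ₁, ∑ γ₂,
            σ β α₁ * σ γ α₂ * Γhat α₁ γ₁ γ₂ * Γhat α₂ γ₁ γ₂ :=
          sum_rot4 _
  refine ⟨?_, hF'⟩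
  -- G in terms of Γhat
  rw [hF', hG]
  symm
  calc ∑ β₁, ∑ β₂, ∑ γ₁, ∑ γ₂, Γ β γ₁ γ₂ * E γ₁ β₁ β₂ * σ γ₂ β₂ * σ γ β₁
      = ∑ β₁, ∑ β₂, ∑ a, E β a β₂ * Γhat a β₁ β₂ * σ γ β₁ := by
        refine Finset.sum_congr rfl fun β₁ _ => Finset.sum_congr rfl fun β₂ _ => ?_
        calc ∑ γ₁, ∑ γ₂, Γ β γ₁ γ₂ * E γ₁ β₁ β₂ * σ γ₂ β₂ * σ γ β₁
            = ∑ γ₁, ∑ γ₂, ∑ a, Γ β γ₁ γ₂ * σ γ₁ a * σ γ₂ β₂ * (Γhat a β₁ β₂ * σ γ β₁) := by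
              refine Finset.sum_congr rfl fun γ₁ _ => Finset.sum_congr rfl fun γ₂ _ => ?_
              rw [key γ₁ β₁ β₂, Finset.mul_sum, Finset.sum_mul, Finset.sum_mul]
              exact Finset.sum_congr rfl fun a _ => by ring
            _ = ∑ a, ∑ γ₁, ∑ γ₂, Γ β γ₁ γ₂ * σ γ₁ a * σ γ₂ β₂ * (Γhat a β₁ β₂ * σ γ β₁) := by
              exact (sum_rot3 (fun a γ₁ γ₂ =>
                Γ β γ₁ γ₂ * σ γ₁ a * σ γ₂ β₂ * (Γhat a β₁ β₂ * σ γ β₁))).symm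
            _ = ∑ a, E β a β₂ * Γhat a β₁ β₂ * σ γ β₁ := by
              refine Finset.sum_congr rfl fun a _ => ?_
              rw [hE β a β₂, Finset.sum_mul, Finset.sum_mul]
              refine Finset.sum_congr rfl fun γ₁ _ => ?_
              rw [Finset.sum_mul, Finset.sum_mul]
              exact Finset.sum_congr rfl fun γ₂ _ => by ring
    _ = ∑ β₁, ∑ β₂, ∑ a, ∑ α₁, σ β α₁ * Γhat α₁ a β₂ * Γhat a β₁ β₂ * σ γ β₁ := by
        refine Finset.sum_congr rfl fun β₁ _ => Finset.sum_congr rfl fun β₂ _ =>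
          Finset.sum_congr rfl fun a _ => ?_
        rw [key β a β₂, Finset.sum_mul, Finset.sum_mul]
    _ = ∑ α₁, ∑ β₁, ∑ β₂, ∑ a,
          σ β α₁ * Γhat α₁ a β₂ * Γhat a β₁ β₂ * σ γ β₁ :=
        (sum_rot4' (fun α₁ β₁ β₂ a =>
          σ β α₁ * Γhat α₁ a β₂ * Γhat a β₁ β₂ * σ γ β₁)).symm
    _ = ∑ α₁, ∑ β₁, ∑ β₂, ∑ a,
          σ β α₁ * σ γ β₁ * Γhat α₁ β₂ a * Γhat β₁ β₂ a := by
        refine Finset.sum_congr rfl fun α₁ _ => Finset.sum_congr rfl fun β₁ _ =>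
          Finset.sum_congr rfl fun β₂ _ => Finset.sum_congr rfl fun a _ => ?_
        rw [(htri α₁ a β₂).1, (htri a β₁ β₂).2]
        ring
    _ = ∑ α₁, ∑ α₂, ∑ β₁, ∑ β₂,
          σ β α₁ * σ γ α₂ * Γhat α₁ β₁ β₂ * Γhat α₂ β₁ β₂ := rfl
end
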